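/- arXiv:1304.3640 — 2 statements merged into one kernel-verified Lean document; each statement's English description precedes it below -/
import Mathlib

section
/- Let q*, p_s ∈ (0,1)^N with q* ⪯ p_s, and let C(q) be the symmetric matrix with diagonal 2 and off-diagonal entries c_{ij}(q) = -(a_{ij} q_i/(1-q_j) + a_{ji} q_j/(1-q_i)) ≤ 0. If C(q*) is not positive definite, then C(p_s) is not positive definite. (Hence if the least fixed point is not stable, neither is any larger fixed point.) -/
/-- The matrix C(q) = -(J(q) + J(q)^T): diagonal entries 2, off-diagonal entries
-(a i j * q i / (1 - q j) + a j i * q j / (1 - q i)). -/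
noncomputable def alohaC {N : ℕ} (a : Fin N → Fin N → ℝ) (q : Fin N → ℝ) :
    Matrix (Fin N) (Fin N) ℝ :=
  Matrix.of fun i j =>
    if i = j then 2
    else -(a i j * q i / (1 - q j) + a j i * q j / (1 - q i))

lemma alohaC_isHermitian {N : ℕ} (a : Fin N → Fin N → ℝ) (q : Fin N → ℝ) :
    (alohaC a q).IsHermitian := by
  ext i j
  simp only [alohaC, Matrix.conjTranspose_apply, Matrix.of_apply, starRingEnd_apply, star_trivial]
  by_cases h : i = j
  · subst h; simp
  · rw [if_neg (fun h' => h h'.symm), if_neg h]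
    ring

lemma alohaC_offdiag_nonpos {N : ℕ} (a : Fin N → Fin N → ℝ) (q : Fin N → ℝ)
    (ha : ∀ i j, a i j = 0 ∨ a i j = 1) (hq : ∀ i, q i ∈ Set.Ioo (0:ℝ) 1)
    {i j : Fin N} (hij : i ≠ j) : alohaC a q i j ≤ 0 := by
  have hai : 0 ≤ a i j := by rcases ha i j with h | h <;> simp [h]
  have haj : 0 ≤ a j i := by rcases ha j i with h | h <;> simp [h]
  have h1 := (hq i).1; have h2 := (hq i).2
  have h3 := (hq j).1; have h4 := (hq j).2
  simp only [alohaC, Matrix.of_apply, if_neg hij]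
  have t1 : 0 ≤ a i j * q i / (1 - q j) :=
    div_nonneg (mul_nonneg hai h1.le) (by linarith)
  have t2 : 0 ≤ a j i * q j / (1 - q i) :=
    div_nonneg (mul_nonneg haj h3.le) (by linarith)
  linarith

lemma alohaC_offdiag_mono {N : ℕ} (a : Fin N → Fin N → ℝ) (qstar ps : Fin N → ℝ)
    (ha : ∀ i j, a i j = 0 ∨ a i j = 1)
    (hq : ∀ i, qstar i ∈ Set.Ioo (0:ℝ) 1) (hp : ∀ i, ps i ∈ Set.Ioo (0:ℝ) 1)
    (hle : qstar ≤ ps) {i j : Fin N} (hij : i ≠ j) :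
    alohaC a ps i j ≤ alohaC a qstar i j := by
  have key : ∀ k l : Fin N, a k l * qstar k / (1 - qstar l) ≤ a k l * ps k / (1 - ps l) := by
    intro k l
    have hak : 0 ≤ a k l := by rcases ha k l with h | h <;> simp [h]
    apply div_le_div₀ (by nlinarith [(hp k).1, (hp l).2])
      (by nlinarith [hle k]) (by linarith [(hp l).2]) (by linarith [hle l])
  simp only [alohaC, Matrix.of_apply, if_neg hij]
  have k1 := key i j; have k2 := key j i
  linarith

/-- for qstar ⪯ ps in (0,1)^N, if C(qstar) is not positive definite
then neither is C(ps); hence if the least fixed point is not stable, neither is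
any larger fixed point. -/
theorem alohaC_not_posDef_mono {N : ℕ} (a : Fin N → Fin N → ℝ)
    (qstar ps : Fin N → ℝ) (ha : ∀ i j, a i j = 0 ∨ a i j = 1)
    (hdiag : ∀ i, a i i = 0)
    (hq : ∀ i, qstar i ∈ Set.Ioo (0:ℝ) 1) (hp : ∀ i, ps i ∈ Set.Ioo (0:ℝ) 1)
    (hle : qstar ≤ ps)
    (hnot : ¬ (alohaC a qstar).PosDef) :
    ¬ (alohaC a ps).PosDef := by
  intro hPD
  apply hnot
  -- extract a bad vector from hPD's negation is wrong direction; instead prove PosDef of qstar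
  -- We argue contrapositively inside: suppose not, get x ≠ 0 with quadratic form ≤ 0.
  rw [Matrix.posDef_iff_dotProduct_mulVec]
  constructor
  · exact alohaC_isHermitian a qstar
  intro x hx
  by_contra hq0
  push_neg at hq0
  -- y = |x|
  set y : Fin N → ℝ := fun i => |x i| with hy
  have hy0 : y ≠ 0 := by
    intro h
    apply hx
    funext i
    have := congrFun h i
    simpa [hy, abs_eq_zero] using this
  have expand : ∀ (M : Matrix (Fin N) (Fin N) ℝ) (v : Fin N → ℝ),
      dotProduct v (M.mulVec v) = ∑ i, ∑ j, v i * (M i j * v j) := by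
    intro M v
    simp [dotProduct, Matrix.mulVec, Finset.mul_sum]
  have hq0' : dotProduct x ((alohaC a qstar).mulVec x) ≤ 0 := by
    simpa using hq0
  -- termwise inequality: y C(ps) y ≤ x C(qstar) x
  have hterm : ∀ i j : Fin N,
      y i * (alohaC a ps i j * y j) ≤ x i * (alohaC a qstar i j * x j) := by
    intro i j
    by_cases h : i = j
    · subst h
      simp [alohaC, hy]
      nlinarith [abs_mul_abs_self (x i)]
    · have h1 : alohaC a ps i j ≤ alohaC a qstar i j :=
        alohaC_offdiag_mono a qstar ps ha hq hp hle h
      have h2 : alohaC a qstar i j ≤ 0 := alohaC_offdiag_nonpos a qstar ha hq h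
      have h3 : x i * x j ≤ y i * y j := by
        rw [hy]; calc x i * x j ≤ |x i * x j| := le_abs_self _
          _ = |x i| * |x j| := abs_mul _ _
      have h4 : 0 ≤ y i * y j := by positivity
      nlinarith
  have hle2 : dotProduct y ((alohaC a ps).mulVec y) ≤
      dotProduct x ((alohaC a qstar).mulVec x) := by
    rw [expand, expand]
    exact Finset.sum_le_sum fun i _ => Finset.sum_le_sum fun j _ => hterm i j
  have := hPD.dotProduct_mulVec_pos hy0
  have : (0:ℝ) < dotProduct y ((alohaC a ps).mulVec y) := by simpa using this
  linarith
end

section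
/- In the three-player chain topology with y_1 = y_3 = y fixed and y_2 varying, a fixed point q = (q_1, q_2, q_1) ∈ (0,1)^3 exists if and only if y_2 ≤ max_{q_2 ∈ [0,1-y]} q_2 (1 - y/(1-q_2))^2; in particular, the set of achievable y_2 is a closed interval [0, y_2^max] and at the critical value the two branches of fixed points coincide. -/
/-- three-player chain with y1 = y3 = y fixed and y2 varying. Let M
be the maximum of h(t) = t*(1 - y/(1-t))^2 over t ∈ [0, 1-y]. Then a symmetric
fixed point (q1, q2, q1) ∈ (0,1)^3 of the rate equations exists iff y2 ≤ M. -/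
theorem chain_fold_bifurcation (y y2 M : ℝ)
    (hy : y ∈ Set.Ioo (0:ℝ) 1) (hy2 : 0 < y2)
    (hM : IsGreatest ((fun t => t * (1 - y / (1 - t))^2) '' Set.Icc (0:ℝ) (1 - y)) M) :
    (∃ q1 q2 : ℝ, q1 ∈ Set.Ioo (0:ℝ) 1 ∧ q2 ∈ Set.Ioo (0:ℝ) 1 ∧
      y = q1 * (1 - q2) ∧ y2 = q2 * (1 - q1)^2) ↔ y2 ≤ M := by
  obtain ⟨hy0, hy1⟩ := hy
  constructor
  · rintro ⟨q1, q2, ⟨hq10, hq11⟩, ⟨hq20, hq21⟩, hE1, hE2⟩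
    -- q1 = y/(1-q2), with 1 - q2 > 0
    have h1q2 : 0 < 1 - q2 := by
      nlinarith
    have hq1 : q1 = y / (1 - q2) := by
      field_simp
      linarith [hE1]
    -- q2 < 1 - y since q1 < 1
    have hq2le : q2 ≤ 1 - y := by
      nlinarith
    have : y2 ∈ ((fun t => t * (1 - y / (1 - t))^2) '' Set.Icc (0:ℝ) (1 - y)) := by
      refine ⟨q2, ⟨le_of_lt hq20, hq2le⟩, ?_⟩
      show q2 * (1 - y / (1 - q2))^2 = y2
      rw [← hq1]; exact hE2.symm
    exact hM.2 this
  · intro hle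
    obtain ⟨⟨t0, ht0mem, ht0eq⟩, _⟩ := hM
    have hcont : ContinuousOn (fun t => t * (1 - y / (1 - t))^2) (Set.Icc (0:ℝ) (1 - y)) := by
      apply ContinuousOn.mul continuousOn_id
      apply ContinuousOn.pow
      apply ContinuousOn.sub continuousOn_const
      apply ContinuousOn.div continuousOn_const (continuousOn_const.sub continuousOn_id)
      intro t ht
      have h2 := ht.2
      intro h
      have h' : 1 - t = 0 := h
      linarith
    obtain ⟨ht00, ht01⟩ := ht0mem
    have hsub : Set.Icc (0:ℝ) t0 ⊆ Set.Icc (0:ℝ) (1 - y) := Set.Icc_subset_Icc le_rfl ht01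
    have hcont' := hcont.mono hsub
    have hIVT := intermediate_value_Icc ht00 hcont'
    have hy2mem : y2 ∈ Set.Icc ((fun t => t * (1 - y / (1 - t))^2) 0)
        ((fun t => t * (1 - y / (1 - t))^2) t0) := by
      constructor
      · simp; linarith
      · rw [ht0eq]; exact hle
    obtain ⟨t, htmem, hteq⟩ := hIVT hy2mem
    simp only at hteq
    have ht0' : 0 ≤ t := htmem.1
    have ht1' : t ≤ 1 - y := le_trans htmem.2 ht01
    -- t > 0 since h t = y2 > 0
    have htpos : 0 < t := by
      rcases lt_or_eq_of_le ht0' with h | h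
      · exact h
      · exfalso; rw [← h] at hteq; simp at hteq; linarith
    -- t < 1 - y, else h t = 0
    have htlt : t < 1 - y := by
      rcases lt_or_eq_of_le ht1' with h | h
      · exact h
      · exfalso
        rw [h] at hteq
        have : 1 - (1 - y) = y := by ring
        rw [this] at hteq
        rw [div_self (ne_of_gt hy0)] at hteq
        simp at hteq
        linarith
    have h1t : 0 < 1 - t := by linarith
    refine ⟨y / (1 - t), t, ⟨?_, ?_⟩, ⟨htpos, by linarith⟩, ?_, ?_⟩
    · positivity
    · rw [div_lt_one h1t]; linarith
    · field_simp
    · rw [← hteq]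
end
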